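/- Fix a real number p with 0 < p < 1 and an integer t ≥ 0, and set b := 1/(1−p). Let A and B be two k-element subsets of the vertex set of G_{n,p} with |A ∩ B| = ℓ. Then P( A is t-stable | B is t-stable ) ≤ b^{C(ℓ,2)} · P( A is t-stable ); consequently P( A and B are both t-stable ) ≤ b^{C(ℓ,2)} · P( A is t-stable )^2. -/

import Mathlib

open MeasureTheory Filter Asymptotics

noncomputable def bernMeasure (p : ℝ) : Measure Bool :=
  ENNReal.ofReal p • Measure.dirac true + ENNReal.ofReal (1 - p) • Measure.dirac false

instance (p : ℝ) : IsFiniteMeasure (bernMeasure p) := by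
  constructor
  simp only [bernMeasure, Measure.add_apply, Measure.smul_apply, smul_eq_mul,
    Measure.dirac_apply, Set.mem_univ, Set.indicator_of_mem, Pi.one_apply, mul_one]
  exact ENNReal.add_lt_top.2 ⟨ENNReal.ofReal_lt_top, ENNReal.ofReal_lt_top⟩

/-- The Erdős–Rényi random graph measure: a random boolean indicator for each
unordered pair of vertices, each `true` with probability `p` independently. -/
noncomputable def gnp (n : ℕ) (p : ℝ) : Measure (Sym2 (Fin n) → Bool) :=
  Measure.pi fun _ => bernMeasure p

/-- The graph associated with an outcome of `gnp`. -/
def graphOf {n : ℕ} (ω : Sym2 (Fin n) → Bool) : SimpleGraph (Fin n) :=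
  SimpleGraph.fromRel (fun i j => ω s(i, j) = true)

/-- `S` is a `t`-stable set in `G`: every vertex of `S` has at most `t`
neighbours inside `S`, i.e. the induced subgraph has maximum degree at most `t`. -/
def IsTStable {V : Type*} (G : SimpleGraph V) (t : ℕ) (S : Finset V) : Prop :=
  ∀ v ∈ S, ({u | u ∈ S ∧ G.Adj v u}).ncard ≤ t

/-- The `t`-stability number: the maximum order of a `t`-stable set. -/
noncomputable def tStabNum {n : ℕ} (G : SimpleGraph (Fin n)) (t : ℕ) : ℕ :=
  sSup {k | ∃ S : Finset (Fin n), IsTStable G t S ∧ S.card = k}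
section Aux

open ProbabilityTheory

variable {n : ℕ} {p : ℝ}

private lemma measAll {α : Type*} [MeasurableSpace α] [MeasurableSingletonClass α] [Countable α]
    (s : Set α) : MeasurableSet s := (Set.to_countable s).measurableSet

lemma bernMeasure_apply (s : Set Bool) :
    bernMeasure p s = ENNReal.ofReal p * s.indicator 1 true
      + ENNReal.ofReal (1 - p) * s.indicator 1 false := by
  simp [bernMeasure, Measure.dirac_apply' _ (measAll s)]

lemma bern_false : bernMeasure p {false} = ENNReal.ofReal (1 - p) := by
  simp [bernMeasure_apply]

lemma bern_prob (hp0 : 0 ≤ p) (hp1 : p ≤ 1) : IsProbabilityMeasure (bernMeasure p) := by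
  constructor
  rw [bernMeasure_apply]
  simp only [Set.indicator_univ, Pi.one_apply, mul_one]
  rw [← ENNReal.ofReal_add hp0 (by linarith)]
  norm_num

lemma gnp_prob (hp0 : 0 ≤ p) (hp1 : p ≤ 1) : IsProbabilityMeasure (gnp n p) := by
  haveI := bern_prob hp0 hp1
  unfold gnp
  infer_instance

lemma graphOf_adj {ω : Sym2 (Fin n) → Bool} {u v : Fin n} :
    (graphOf ω).Adj v u ↔ v ≠ u ∧ ω s(v, u) = true := by
  simp only [graphOf, SimpleGraph.fromRel_adj]
  constructor
  · rintro ⟨h, h2 | h2⟩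
    · exact ⟨h, h2⟩
    · exact ⟨h, by rwa [Sym2.eq_swap]⟩
  · rintro ⟨h, h2⟩
    exact ⟨h, Or.inl h2⟩

lemma isTStable_mono {t : ℕ} {A : Finset (Fin n)} {ω ω' : Sym2 (Fin n) → Bool}
    (h : ∀ e, ω' e = true → ω e = true) (hst : IsTStable (graphOf ω) t A) :
    IsTStable (graphOf ω') t A := by
  intro v hv
  refine le_trans (Set.ncard_le_ncard ?_ (Set.toFinite _)) (hst v hv)
  rintro u ⟨hu, hadj⟩
  rw [graphOf_adj] at hadj
  exact ⟨hu, graphOf_adj.2 ⟨hadj.1, h _ hadj.2⟩⟩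

lemma isTStable_congr {t : ℕ} {A : Finset (Fin n)} {ω ω' : Sym2 (Fin n) → Bool}
    (h : ∀ e : Sym2 (Fin n), ¬ e.IsDiag → (∀ v ∈ e, v ∈ A) → ω e = ω' e) :
    IsTStable (graphOf ω) t A ↔ IsTStable (graphOf ω') t A := by
  have key : ∀ ω ω' : Sym2 (Fin n) → Bool,
      (∀ e : Sym2 (Fin n), ¬ e.IsDiag → (∀ v ∈ e, v ∈ A) → ω e = ω' e) →
      IsTStable (graphOf ω) t A → IsTStable (graphOf ω') t A := by
    intro ω ω' h hst v hv
    have hset : {u | u ∈ A ∧ (graphOf ω').Adj v u} = {u | u ∈ A ∧ (graphOf ω).Adj v u} := by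
      ext u
      simp only [Set.mem_setOf_eq, graphOf_adj]
      refine and_congr_right fun hu => and_congr_right fun hne => ?_
      have hd : ¬ (s(v, u) : Sym2 (Fin n)).IsDiag := by
        simp only [Sym2.mk_isDiag_iff]; exact hne
      have hmem : ∀ x ∈ (s(v, u) : Sym2 (Fin n)), x ∈ A := by
        intro x hx
        rcases Sym2.mem_iff.1 hx with rfl | rfl
        · exact hv
        · exact hu
      rw [h s(v, u) hd hmem]
    have := hst v hv
    show ({u | u ∈ A ∧ (graphOf ω').Adj v u}).ncard ≤ t
    rw [hset]
    exact this
  exact ⟨key ω ω' h, key ω' ω fun e h1 h2 => (h e h1 h2).symm⟩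

end Aux
section Aux2

open ProbabilityTheory

variable {n : ℕ} {p : ℝ}

lemma gnp_allFalse (hp0 : 0 ≤ p) (hp1 : p ≤ 1) (S : Finset (Sym2 (Fin n))) :
    gnp n p {ω | ∀ e ∈ S, ω e = false} = ENNReal.ofReal (1 - p) ^ S.card := by
  classical
  have hset : {ω : Sym2 (Fin n) → Bool | ∀ e ∈ S, ω e = false}
      = Set.pi Set.univ (fun e => if e ∈ S then ({false} : Set Bool) else Set.univ) := by
    ext ω
    simp only [Set.mem_setOf_eq, Set.mem_pi, Set.mem_univ, true_implies]
    constructor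
    · intro h e
      by_cases he : e ∈ S <;> simp [he, h e]
    · intro h e he
      have := h e
      simpa [he] using this
  have hbern : ∀ e : Sym2 (Fin n),
      bernMeasure p (if e ∈ S then ({false} : Set Bool) else Set.univ)
        = if e ∈ S then ENNReal.ofReal (1 - p) else 1 := by
    intro e
    by_cases he : e ∈ S
    · simp [he, bern_false]
    · haveI := bern_prob hp0 hp1
      rw [if_neg he, if_neg he]
      exact measure_univ
  show Measure.pi (fun _ : Sym2 (Fin n) => bernMeasure p) _ = _
  rw [hset, Measure.pi_pi]
  simp_rw [hbern]
  rw [Finset.prod_ite_mem, Finset.univ_inter, Finset.prod_const]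

lemma gnp_indep (hp0 : 0 ≤ p) (hp1 : p ≤ 1) (q : Sym2 (Fin n) → Prop) [DecidablePred q]
    {X Y : Set (Sym2 (Fin n) → Bool)}
    (hX : ∀ ω ω' : Sym2 (Fin n) → Bool, (∀ e, ¬ q e → ω e = ω' e) → ω ∈ X → ω' ∈ X)
    (hY : ∀ ω ω' : Sym2 (Fin n) → Bool, (∀ e, q e → ω e = ω' e) → ω ∈ Y → ω' ∈ Y) :
    gnp n p (X ∩ Y) = gnp n p X * gnp n p Y := by
  classical
  set e := MeasurableEquiv.piEquivPiSubtypeProd (fun _ : Sym2 (Fin n) => Bool) q with he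
  have hmp := measurePreserving_piEquivPiSubtypeProd (fun _ : Sym2 (Fin n) => bernMeasure p) q
  set μ₁ := Measure.pi fun _ : {i : Sym2 (Fin n) // q i} => bernMeasure p with hμ₁
  set μ₂ := Measure.pi fun _ : {i : Sym2 (Fin n) // ¬ q i} => bernMeasure p with hμ₂
  set X₂ : Set ({i : Sym2 (Fin n) // ¬ q i} → Bool)
    := (fun (ω : Sym2 (Fin n) → Bool) (i : {i : Sym2 (Fin n) // ¬ q i}) => ω i.1) '' X with hX₂
  set Y₁ : Set ({i : Sym2 (Fin n) // q i} → Bool)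
    := (fun (ω : Sym2 (Fin n) → Bool) (i : {i : Sym2 (Fin n) // q i}) => ω i.1) '' Y with hY₁
  have hXeq : X = e ⁻¹' (Set.univ ×ˢ X₂) := by
    ext ω
    simp only [Set.mem_preimage, Set.mem_prod, Set.mem_univ, true_and, hX₂, Set.mem_image]
    constructor
    · intro hω
      exact ⟨ω, hω, rfl⟩
    · rintro ⟨ω₀, hω₀, hproj⟩
      refine hX ω₀ ω (fun i hi => ?_) hω₀
      exact congrFun hproj ⟨i, hi⟩
  have hYeq : Y = e ⁻¹' (Y₁ ×ˢ Set.univ) := by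
    ext ω
    simp only [Set.mem_preimage, Set.mem_prod, Set.mem_univ, and_true, hY₁, Set.mem_image]
    constructor
    · intro hω
      exact ⟨ω, hω, rfl⟩
    · rintro ⟨ω₀, hω₀, hproj⟩
      refine hY ω₀ ω (fun i hi => ?_) hω₀
      exact congrFun hproj ⟨i, hi⟩
  have hmap : ∀ Z : Set (({i : Sym2 (Fin n) // q i} → Bool) × ({i : Sym2 (Fin n) // ¬ q i} → Bool)),
      gnp n p (e ⁻¹' Z) = (μ₁.prod μ₂) Z := by
    intro Z
    rw [show gnp n p = Measure.pi (fun _ : Sym2 (Fin n) => bernMeasure p) from rfl,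
      ← hmp.map_eq, Measure.map_apply e.measurable (measAll Z)]
  have hXY : X ∩ Y = e ⁻¹' (Y₁ ×ˢ X₂) := by
    rw [hXeq, hYeq, ← Set.preimage_inter, Set.prod_inter_prod, Set.univ_inter, Set.inter_univ]
  have h1 : gnp n p (X ∩ Y) = μ₁ Y₁ * μ₂ X₂ := by rw [hXY, hmap, Measure.prod_prod]
  have h2 : gnp n p X = μ₁ Set.univ * μ₂ X₂ := by rw [hXeq, hmap, Measure.prod_prod]
  have h3 : gnp n p Y = μ₁ Y₁ * μ₂ Set.univ := by rw [hYeq, hmap, Measure.prod_prod]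
  have h4 : μ₁ Set.univ * μ₂ Set.univ = 1 := by
    have h5 := hmap Set.univ
    rw [Set.preimage_univ] at h5
    haveI := gnp_prob (n := n) hp0 hp1
    rw [← Set.univ_prod_univ, Measure.prod_prod] at h5
    rw [← h5, measure_univ]
  rw [h1, h2, h3,
    show μ₁ Set.univ * μ₂ X₂ * (μ₁ Y₁ * μ₂ Set.univ)
      = μ₁ Y₁ * μ₂ X₂ * (μ₁ Set.univ * μ₂ Set.univ) by ring, h4, mul_one]

end Aux2
section Aux3

open ProbabilityTheory

variable {n : ℕ} {p : ℝ}

private def sym2Equiv {α : Type*} (π : Equiv.Perm α) : Sym2 α ≃ Sym2 α where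
  toFun := Sym2.map π
  invFun := Sym2.map π.symm
  left_inv := fun x => by
    rw [Sym2.map_map, Equiv.symm_comp_self, Sym2.map_id, id_eq]
  right_inv := fun x => by
    rw [Sym2.map_map, Equiv.self_comp_symm, Sym2.map_id, id_eq]

lemma gnp_mp_comp (σ : Sym2 (Fin n) ≃ Sym2 (Fin n)) :
    MeasureTheory.MeasurePreserving (fun ω : Sym2 (Fin n) → Bool => ω ∘ σ)
      (gnp n p) (gnp n p) := by
  constructor
  · exact fun s _ => measAll _
  · have hgnp : gnp n p = Measure.pi (fun _ : Sym2 (Fin n) => bernMeasure p) := rfl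
    rw [hgnp]
    refine (Measure.pi_eq fun s hs => ?_).symm
    have hmeas : Measurable (fun ω : Sym2 (Fin n) → Bool => ω ∘ σ) :=
      fun s _ => measAll _
    rw [Measure.map_apply hmeas (measAll _)]
    have hpre : (fun ω : Sym2 (Fin n) → Bool => ω ∘ σ) ⁻¹' (Set.pi Set.univ s)
        = Set.pi Set.univ (fun i => s (σ.symm i)) := by
      ext ω
      simp only [Set.mem_preimage, Set.mem_pi, Set.mem_univ, true_implies, Function.comp_apply]
      constructor
      · intro h j
        have := h (σ.symm j)
        rwa [Equiv.apply_symm_apply] at this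
      · intro h i
        have := h (σ i)
        rwa [Equiv.symm_apply_apply] at this
    rw [hpre, Measure.pi_pi]
    exact Equiv.prod_comp σ.symm fun i => bernMeasure p (s i)

lemma isTStable_relabel {t : ℕ} (π : Equiv.Perm (Fin n)) {A B : Finset (Fin n)}
    (hπ : ∀ v, v ∈ A ↔ π v ∈ B) (ω : Sym2 (Fin n) → Bool)
    (h : IsTStable (graphOf ω) t B) :
    IsTStable (graphOf (ω ∘ Sym2.map π)) t A := by
  have hadj : ∀ i j, (graphOf (ω ∘ Sym2.map π)).Adj i j ↔ (graphOf ω).Adj (π i) (π j) := by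
    intro i j
    simp only [graphOf_adj, Function.comp_apply, Sym2.map_pair_eq]
    constructor
    · rintro ⟨h1, h2⟩
      exact ⟨fun hh => h1 (π.injective hh), h2⟩
    · rintro ⟨h1, h2⟩
      exact ⟨fun hh => h1 (by rw [hh]), h2⟩
  intro v hv
  have hB : π v ∈ B := (hπ v).1 hv
  have hb := h (π v) hB
  have hset : {u | u ∈ A ∧ (graphOf (ω ∘ Sym2.map π)).Adj v u}
      = ⇑π ⁻¹' {u | u ∈ B ∧ (graphOf ω).Adj (π v) u} := by
    ext u
    simp only [Set.mem_setOf_eq, Set.mem_preimage, hadj, hπ u]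
  show ({u | u ∈ A ∧ (graphOf (ω ∘ Sym2.map π)).Adj v u}).ncard ≤ t
  rw [hset, ← Equiv.image_symm_eq_preimage π, Set.ncard_image_of_injective _ π.symm.injective]
  exact hb

lemma gnp_stable_symm (hp0 : 0 ≤ p) (hp1 : p ≤ 1) {t : ℕ} {A B : Finset (Fin n)}
    (hcard : A.card = B.card) :
    gnp n p {ω | IsTStable (graphOf ω) t A} = gnp n p {ω | IsTStable (graphOf ω) t B} := by
  classical
  obtain ⟨π, hπ⟩ : ∃ π : Equiv.Perm (Fin n), ∀ v, v ∈ A ↔ π v ∈ B := by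
    have h1 : Fintype.card {x : Fin n // x ∈ A} = Fintype.card {x : Fin n // x ∈ B} := by
      simpa [Fintype.card_coe] using hcard
    have h2 : Fintype.card {x : Fin n // ¬ x ∈ A} = Fintype.card {x : Fin n // ¬ x ∈ B} := by
      rw [Fintype.card_subtype_compl, Fintype.card_subtype_compl, h1]
    refine ⟨Equiv.subtypeCongr (Fintype.equivOfCardEq h1) (Fintype.equivOfCardEq h2), fun v => ?_⟩
    by_cases hv : v ∈ A
    · simp only [Equiv.subtypeCongr, Equiv.trans_apply, Equiv.sumCompl_symm_apply_of_pos hv,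
        Equiv.sumCongr_apply, Sum.map_inl, Equiv.sumCompl_apply_inl]
      exact iff_of_true hv (Fintype.equivOfCardEq h1 ⟨v, hv⟩).2
    · simp only [Equiv.subtypeCongr, Equiv.trans_apply, Equiv.sumCompl_symm_apply_of_neg hv,
        Equiv.sumCongr_apply, Sum.map_inr, Equiv.sumCompl_apply_inr]
      exact iff_of_false hv (Fintype.equivOfCardEq h2 ⟨v, hv⟩).2
  have hmp := gnp_mp_comp (n := n) (p := p) (sym2Equiv π)
  have hpre : (fun ω : Sym2 (Fin n) → Bool => ω ∘ (sym2Equiv π))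
      ⁻¹' {ω | IsTStable (graphOf ω) t A} = {ω | IsTStable (graphOf ω) t B} := by
    have hπ' : ∀ v, v ∈ B ↔ π.symm v ∈ A := by
      intro v
      rw [hπ (π.symm v), Equiv.apply_symm_apply]
    ext ω
    simp only [Set.mem_preimage, Set.mem_setOf_eq]
    constructor
    · intro hst
      have := isTStable_relabel π.symm hπ' (ω ∘ Sym2.map ⇑π) hst
      have heq : (ω ∘ Sym2.map ⇑π) ∘ Sym2.map ⇑π.symm = ω := by
        funext e
        rw [Function.comp_apply, Function.comp_apply, Sym2.map_map,
          Equiv.self_comp_symm, Sym2.map_id, id_eq]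
      rwa [heq] at this
    · intro hst
      exact isTStable_relabel π hπ ω hst
  rw [← hpre, hmp.measure_preimage (measAll _).nullMeasurableSet]

end Aux3
theorem stmt13 (p : ℝ) (hp0 : 0 < p) (hp1 : p < 1) (t : ℕ) (n k ℓ : ℕ)
    (A B : Finset (Fin n)) (hA : A.card = k) (hB : B.card = k)
    (hAB : (A ∩ B).card = ℓ) :
    ProbabilityTheory.cond (gnp n p) {ω | IsTStable (graphOf ω) t B}
        {ω | IsTStable (graphOf ω) t A}
      ≤ ENNReal.ofReal ((1/(1-p)) ^ Nat.choose ℓ 2) *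
          gnp n p {ω | IsTStable (graphOf ω) t A} ∧
    gnp n p ({ω | IsTStable (graphOf ω) t A} ∩ {ω | IsTStable (graphOf ω) t B})
      ≤ ENNReal.ofReal ((1/(1-p)) ^ Nat.choose ℓ 2) *
          (gnp n p {ω | IsTStable (graphOf ω) t A}) ^ 2 := by
  classical
  haveI := gnp_prob (n := n) hp0.le hp1.le
  set μ := gnp n p with hμ
  set E := {ω : Sym2 (Fin n) → Bool | IsTStable (graphOf ω) t A} with hE
  set F := {ω : Sym2 (Fin n) → Bool | IsTStable (graphOf ω) t B} with hF
  set S : Finset (Sym2 (Fin n)) := ((A ∩ B).sym2).filter (fun e => ¬ e.IsDiag) with hSdef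
  set m := S.card with hm
  have hb1 : (0:ℝ) < 1 - p := by linarith
  -- membership characterization of S
  have hSmem : ∀ e : Sym2 (Fin n), e ∈ S ↔ (∀ v ∈ e, v ∈ A ∩ B) ∧ ¬ e.IsDiag := by
    intro e
    rw [hSdef, Finset.mem_filter, Finset.mem_sym2_iff]
  -- cardinality bound
  have hcard : m ≤ Nat.choose ℓ 2 := by
    rw [hm, ← hAB, ← Finset.card_powersetCard 2 (A ∩ B)]
    refine Finset.card_le_card_of_injOn (fun e => (A ∩ B).filter (· ∈ e)) ?_ ?_
    · intro e he
      rw [Finset.mem_coe, hSmem] at he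
      obtain ⟨hmem, hdiag⟩ := he
      induction e using Sym2.ind with
      | _ a b =>
        have hab : a ≠ b := by rwa [Sym2.mk_isDiag_iff] at hdiag
        have ha : a ∈ A ∩ B := hmem a (Sym2.mem_mk_left a b)
        have hbb : b ∈ A ∩ B := hmem b (Sym2.mem_mk_right a b)
        have hfeq : (A ∩ B).filter (· ∈ s(a, b)) = {a, b} := by
          ext x
          simp only [Finset.mem_filter, Sym2.mem_iff, Finset.mem_insert, Finset.mem_singleton]
          constructor
          · rintro ⟨-, h⟩; exact h
          · rintro (rfl | rfl)
            · exact ⟨ha, Or.inl rfl⟩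
            · exact ⟨hbb, Or.inr rfl⟩
        refine Finset.mem_powersetCard.2 ⟨?_, ?_⟩
        · show (A ∩ B).filter (· ∈ s(a, b)) ⊆ A ∩ B
          exact Finset.filter_subset _ _
        · show ((A ∩ B).filter (· ∈ s(a, b))).card = 2
          rw [hfeq]
          exact Finset.card_pair hab
    · intro e he e' he' heq
      simp only [Finset.mem_coe, hSmem] at he he'
      obtain ⟨hmem, hdiag⟩ := he
      induction e using Sym2.ind with
      | _ a b =>
        have hab : a ≠ b := by rwa [Sym2.mk_isDiag_iff] at hdiag
        have ha : a ∈ A ∩ B := hmem a (Sym2.mem_mk_left a b)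
        have hbb : b ∈ A ∩ B := hmem b (Sym2.mem_mk_right a b)
        have heq' : (A ∩ B).filter (· ∈ s(a, b)) = (A ∩ B).filter (· ∈ e') := heq
        have hamem : a ∈ (A ∩ B).filter (· ∈ e') := by
          rw [← heq']
          exact Finset.mem_filter.2 ⟨ha, Sym2.mem_mk_left a b⟩
        have hbmem : b ∈ (A ∩ B).filter (· ∈ e') := by
          rw [← heq']
          exact Finset.mem_filter.2 ⟨hbb, Sym2.mem_mk_right a b⟩
        have ha' : a ∈ e' := (Finset.mem_filter.1 hamem).2
        have hb' : b ∈ e' := (Finset.mem_filter.1 hbmem).2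
        exact ((Sym2.mem_and_mem_iff hab).1 ⟨ha', hb'⟩).symm
  -- the constant
  set c : ENNReal := ENNReal.ofReal ((1/(1-p)) ^ m) with hc
  have hcmul : c * ENNReal.ofReal (1 - p) ^ m = 1 := by
    rw [hc, ← ENNReal.ofReal_pow hb1.le, ← ENNReal.ofReal_mul (by positivity), ← mul_pow]
    rw [one_div, inv_mul_cancel₀ hb1.ne', one_pow, ENNReal.ofReal_one]
  -- the zeroed-out map
  set z : (Sym2 (Fin n) → Bool) → (Sym2 (Fin n) → Bool)
    := fun ω e => if e ∈ S then false else ω e with hz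
  set E₀ : Set (Sym2 (Fin n) → Bool) := z ⁻¹' E with hE₀
  have hEsub : E ⊆ E₀ := by
    intro ω hω
    show z ω ∈ E
    refine isTStable_mono (fun e he => ?_) hω
    by_cases hes : e ∈ S
    · simp [hz, hes] at he
    · simpa [hz, hes] using he
  -- the dependency predicate
  set q : Sym2 (Fin n) → Prop := fun e => ¬ e.IsDiag ∧ (∀ v ∈ e, v ∈ A) ∧ e ∉ S with hq
  -- E₀ depends only on q-coordinates
  have hE₀dep : ∀ ω ω' : Sym2 (Fin n) → Bool, (∀ e, q e → ω e = ω' e) → ω ∈ E₀ → ω' ∈ E₀ := by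
    intro ω ω' h hω
    show z ω' ∈ E
    have : IsTStable (graphOf (z ω)) t A ↔ IsTStable (graphOf (z ω')) t A := by
      refine isTStable_congr fun e hd hmemA => ?_
      by_cases hes : e ∈ S
      · simp [hz, hes]
      · simp only [hz, if_neg hes]
        exact h e ⟨hd, hmemA, hes⟩
    exact this.1 hω
  -- F depends only on coordinates outside q
  have hFdep : ∀ ω ω' : Sym2 (Fin n) → Bool, (∀ e, ¬ q e → ω e = ω' e) → ω ∈ F → ω' ∈ F := by
    intro ω ω' h hω
    have : IsTStable (graphOf ω) t B ↔ IsTStable (graphOf ω') t B := by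
      refine isTStable_congr fun e hd hmemB => ?_
      refine h e ?_
      rintro ⟨hd', hmemA, hns⟩
      exact hns ((hSmem e).2 ⟨fun v hv => Finset.mem_inter.2 ⟨hmemA v hv, hmemB v hv⟩, hd⟩)
    exact this.1 hω
  -- Z : all S-coordinates false
  set Z : Set (Sym2 (Fin n) → Bool) := {ω | ∀ e ∈ S, ω e = false} with hZ
  have hZdep : ∀ ω ω' : Sym2 (Fin n) → Bool, (∀ e, ¬ q e → ω e = ω' e) → ω ∈ Z → ω' ∈ Z := by
    intro ω ω' h hω e hes
    rw [← h e (fun hqe => hqe.2.2 hes)]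
    exact hω e hes
  have hkeyF : μ (F ∩ E₀) = μ F * μ E₀ := gnp_indep hp0.le hp1.le q hFdep hE₀dep
  have hkeyZ : μ (Z ∩ E₀) = μ Z * μ E₀ := gnp_indep hp0.le hp1.le q hZdep hE₀dep
  have hμZ : μ Z = ENNReal.ofReal (1 - p) ^ m := gnp_allFalse hp0.le hp1.le S
  have hZE : Z ∩ E₀ ⊆ E := by
    rintro ω ⟨hωZ, hωE₀⟩
    have hzω : z ω = ω := by
      funext e
      by_cases hes : e ∈ S
      · rw [hz]; simp only [if_pos hes]; exact (hωZ e hes).symm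
      · rw [hz]; simp only [if_neg hes]
    have : z ω ∈ E := hωE₀
    rwa [hzω] at this
  have hE₀le : μ E₀ ≤ c * μ E := by
    calc μ E₀ = c * (ENNReal.ofReal (1 - p) ^ m * μ E₀) := by
          rw [← mul_assoc, hcmul, one_mul]
      _ = c * μ (Z ∩ E₀) := by rw [hkeyZ, hμZ]
      _ ≤ c * μ E := mul_le_mul_right (measure_mono hZE) c
  have hmain : μ (E ∩ F) ≤ c * (μ E * μ F) := by
    calc μ (E ∩ F) ≤ μ (F ∩ E₀) := by
          refine measure_mono ?_
          rintro ω ⟨h1, h2⟩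
          exact ⟨h2, hEsub h1⟩
      _ = μ F * μ E₀ := hkeyF
      _ ≤ μ F * (c * μ E) := mul_le_mul_right hE₀le _
      _ = c * (μ E * μ F) := by ring
  have hcc : c ≤ ENNReal.ofReal ((1/(1-p)) ^ Nat.choose ℓ 2) := by
    refine ENNReal.ofReal_le_ofReal ?_
    refine pow_le_pow_right₀ ?_ hcard
    exact one_le_one_div hb1 (by linarith)
  have hμFE : μ F = μ E := gnp_stable_symm hp0.le hp1.le (hB.trans hA.symm)
  have hEne0 : μ E ≠ 0 := by
    intro h0
    have hsub : {ω : Sym2 (Fin n) → Bool | ∀ e ∈ (Finset.univ : Finset (Sym2 (Fin n))),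
        ω e = false} ⊆ E := by
      intro ω hω v hv
      have hempty : {u | u ∈ A ∧ (graphOf ω).Adj v u} = ∅ := by
        ext u
        simp only [Set.mem_setOf_eq, Set.mem_empty_iff_false, iff_false, not_and]
        intro _ hadj
        have := (graphOf_adj.1 hadj).2
        rw [hω s(v, u) (Finset.mem_univ _)] at this
        exact Bool.false_ne_true this
      show ({u | u ∈ A ∧ (graphOf ω).Adj v u}).ncard ≤ t
      rw [hempty]
      simp
    have hnull := measure_mono_null hsub h0
    rw [hμ, gnp_allFalse hp0.le hp1.le] at hnull
    exact pow_ne_zero _ (by simp only [ne_eq, ENNReal.ofReal_eq_zero, not_le]; linarith) hnull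
  constructor
  · rw [ProbabilityTheory.cond_apply (measAll F) μ E, Set.inter_comm]
    calc (μ F)⁻¹ * μ (E ∩ F) ≤ (μ F)⁻¹ * (c * (μ E * μ F)) := mul_le_mul_right hmain _
      _ = c * μ E * ((μ F)⁻¹ * μ F) := by ring
      _ = c * μ E := by
          rw [ENNReal.inv_mul_cancel (hμFE ▸ hEne0) (measure_ne_top _ _), mul_one]
      _ ≤ ENNReal.ofReal ((1/(1-p)) ^ Nat.choose ℓ 2) * μ E := mul_le_mul_left hcc _
  · calc μ (E ∩ F) ≤ c * (μ E * μ F) := hmain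
      _ = c * (μ E) ^ 2 := by rw [hμFE]; ring
      _ ≤ ENNReal.ofReal ((1/(1-p)) ^ Nat.choose ℓ 2) * (μ E) ^ 2 := mul_le_mul_left hcc _
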